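/- Let G be a digraph on {1,…,n}, P_π̃ the weighted poset induced by G on m elements, and φ_π̃ : 𝔽₂ⁿ → 𝔽₂^m the associated map. If C ⊆ 𝔽₂ⁿ is an r-covering G-code, then its image C^{φ_π̃} = {x^{φ_π̃} : x ∈ C} ⊆ 𝔽₂^m is an r-covering P_π̃-code. -/

import Mathlib

open Classical

noncomputable def wtP {α : Type*} [Fintype α] (le : α → α → Prop) (π : α → ℕ)
    (x : α → ZMod 2) : ℕ :=
  ∑ j ∈ Finset.univ.filter (fun j => ∃ i, x i ≠ 0 ∧ le j i), π j

noncomputable def dP {α : Type*} [Fintype α] (le : α → α → Prop) (π : α → ℕ)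
    (x y : α → ZMod 2) : ℕ :=
  wtP le π (x - y)

noncomputable def wtG {V : Type*} [Fintype V] (E : V → V → Prop) (x : V → ZMod 2) : ℕ :=
  (Finset.univ.filter (fun v => ∃ u, x u ≠ 0 ∧ Relation.ReflTransGen E u v)).card

noncomputable def dG {V : Type*} [Fintype V] (E : V → V → Prop) (x y : V → ZMod 2) : ℕ :=
  wtG E (x - y)

def IsCovering {β : Type*} (d : β → β → ℕ) (C : Set β) (r : ℕ) : Prop :=
  ∀ x, ∃ c ∈ C, d c x ≤ r

def sim {V : Type*} (E : V → V → Prop) (u v : V) : Prop :=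
  u = v ∨ (Relation.TransGen E u v ∧ Relation.TransGen E v u)

theorem sim_equivalence {V : Type*} (E : V → V → Prop) : Equivalence (sim E) := by
  constructor
  · intro x; exact Or.inl rfl
  · intro x y h
    rcases h with h | ⟨a, b⟩
    · exact Or.inl h.symm
    · exact Or.inr ⟨b, a⟩
  · intro x y z h1 h2
    rcases h1 with h1 | ⟨a, b⟩
    · subst h1; exact h2
    · rcases h2 with h2 | ⟨c, d⟩
      · subst h2; exact Or.inr ⟨a, b⟩
      · exact Or.inr ⟨a.trans c, d.trans b⟩

def simSetoid {V : Type*} (E : V → V → Prop) : Setoid V :=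
  ⟨sim E, sim_equivalence E⟩

noncomputable instance {V : Type*} [Fintype V] (E : V → V → Prop) :
    Fintype (Quotient (simSetoid E)) :=
  Fintype.ofFinite _

def clsLe {V : Type*} (E : V → V → Prop) (c d : Quotient (simSetoid E)) : Prop :=
  c = d ∨ ∃ u v, Quotient.mk (simSetoid E) u = c ∧ Quotient.mk (simSetoid E) v = d ∧
    Relation.TransGen E v u

noncomputable def clsWt {V : Type*} [Fintype V] (E : V → V → Prop)
    (c : Quotient (simSetoid E)) : ℕ :=
  (Finset.univ.filter (fun v => Quotient.mk (simSetoid E) v = c)).card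

noncomputable def phiTilde {V : Type*} (E : V → V → Prop) (x : V → ZMod 2) :
    Quotient (simSetoid E) → ZMod 2 :=
  fun c => if ∀ v, Quotient.mk (simSetoid E) v = c → x v = 0 then 0 else 1

lemma simRTG {V : Type*} (E : V → V → Prop) {u v : V} (h : sim E u v) :
    Relation.ReflTransGen E u v := by
  rcases h with rfl | ⟨h1, _⟩
  · exact Relation.ReflTransGen.refl
  · exact h1.to_reflTransGen

lemma pre_ne {n : ℕ} (E : Fin n → Fin n → Prop) (a b : Fin n → ZMod 2)
    (i : Quotient (simSetoid E)) (h : phiTilde E a i ≠ phiTilde E b i) :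
    ∃ u, Quotient.mk (simSetoid E) u = i ∧ (a - b) u ≠ 0 := by
  unfold phiTilde at h
  by_cases ha : ∀ v, Quotient.mk (simSetoid E) v = i → a v = 0 <;>
    by_cases hb : ∀ v, Quotient.mk (simSetoid E) v = i → b v = 0
  · rw [if_pos ha, if_pos hb] at h; exact absurd rfl h
  · push_neg at hb
    obtain ⟨u, hu, hbu⟩ := hb
    refine ⟨u, hu, ?_⟩
    simp only [Pi.sub_apply, ha u hu, zero_sub, neg_ne_zero]
    exact hbu
  · push_neg at ha
    obtain ⟨u, hu, hau⟩ := ha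
    refine ⟨u, hu, ?_⟩
    simp only [Pi.sub_apply, hb u hu, sub_zero]
    exact hau
  · rw [if_neg ha, if_neg hb] at h; exact absurd rfl h

lemma key_le {n : ℕ} (E : Fin n → Fin n → Prop) (a b : Fin n → ZMod 2) :
    dP (clsLe E) (clsWt E) (phiTilde E a) (phiTilde E b) ≤ dG E a b := by
  unfold dP wtP dG wtG clsWt
  set z : Fin n → ZMod 2 := a - b with hz
  set S : Finset (Quotient (simSetoid E)) :=
    Finset.univ.filter
      (fun j => ∃ i, (phiTilde E a - phiTilde E b) i ≠ 0 ∧ clsLe E j i) with hS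
  set T : Finset (Fin n) :=
    Finset.univ.filter (fun v => Quotient.mk (simSetoid E) v ∈ S) with hT
  have hcard : T.card = ∑ j ∈ S,
      (Finset.univ.filter (fun v => Quotient.mk (simSetoid E) v = j)).card := by
    rw [Finset.card_eq_sum_card_fiberwise
      (f := fun v => Quotient.mk (simSetoid E) v) (s := T) (t := S)
      (fun v hv => (Finset.mem_filter.mp hv).2)]
    refine Finset.sum_congr rfl (fun j hj => ?_)
    congr 1
    ext v
    simp only [hT, Finset.mem_filter, Finset.mem_univ, true_and]
    constructor
    · rintro ⟨_, h⟩; exact h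
    · intro h; exact ⟨h ▸ hj, h⟩
  rw [← hcard]
  apply Finset.card_le_card
  intro v hv
  simp only [hT, hS, Finset.mem_filter, Finset.mem_univ, true_and] at hv
  obtain ⟨i, hi, hle⟩ := hv
  have hi' : phiTilde E a i ≠ phiTilde E b i := by
    intro h0; exact hi (by simp [Pi.sub_apply, h0])
  obtain ⟨u, hu, huz⟩ := pre_ne E a b i hi'
  simp only [Finset.mem_filter, Finset.mem_univ, true_and]
  rcases hle with heq | ⟨u', v', hu', hv', htg⟩
  · -- class of v equals i, so u ~ v
    refine ⟨u, huz, simRTG E ?_⟩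
    have : Quotient.mk (simSetoid E) u = Quotient.mk (simSetoid E) v := by
      rw [hu, heq]
    exact Quotient.exact this
  · -- path: u ~ v' (class i), v' ⟶ u', u' ~ v (class of v)
    refine ⟨u, huz, ?_⟩
    have h1 : Relation.ReflTransGen E u v' :=
      simRTG E (Quotient.exact (hu.trans hv'.symm))
    have h3 : Relation.ReflTransGen E u' v :=
      simRTG E (Quotient.exact hu')
    exact (h1.trans htg.to_reflTransGen).trans h3

theorem stmt_6 {n : ℕ} (E : Fin n → Fin n → Prop) (hirrefl : ∀ v, ¬ E v v)
    (C : Set (Fin n → ZMod 2)) (r : ℕ)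
    (hC : IsCovering (dG E) C r) :
    IsCovering (dP (clsLe E) (clsWt E)) (phiTilde E '' C) r := by
  intro y
  set x : Fin n → ZMod 2 := fun v => y (Quotient.mk (simSetoid E) v) with hx
  obtain ⟨c, hcC, hd⟩ := hC x
  refine ⟨phiTilde E c, ⟨c, hcC, rfl⟩, ?_⟩
  have hone : ∀ a : ZMod 2, a ≠ 0 → a = 1 := by decide
  have hφx : phiTilde E x = y := by
    funext i
    obtain ⟨v, hv⟩ := Quotient.exists_rep i
    unfold phiTilde
    split_ifs with h
    · have := h v hv
      simp only [hx] at this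
      rw [hv] at this
      exact this.symm
    · push_neg at h
      obtain ⟨w, hw, hw0⟩ := h
      simp only [hx, hw] at hw0
      exact (hone _ hw0).symm
  calc dP (clsLe E) (clsWt E) (phiTilde E c) y
      = dP (clsLe E) (clsWt E) (phiTilde E c) (phiTilde E x) := by rw [hφx]
    _ ≤ dG E c x := key_le E c x
    _ ≤ r := hd
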